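/- Dispersive kernel bound: there is a constant C = C(φ) such that for all N > 0, all t ≠ 0 and all r, s ≥ 1, the frequency-localized half-wave kernel K_N(t, r, s) = (2/π) ∫₀^∞ (sin(λ(r−1))/r) · (sin(λ(s−1))/s) · e^{iλt} · ψ̃_N(λ) dλ satisfies |K_N(t, r, s)| ≤ C · N² / |t|. -/

import Mathlib

open MeasureTheory Set
open scoped ENNReal

/-- `ψ_N(λ) = φ(λ/N) − φ(λ/(N/2)) = φ(λ/N) − φ(2λ/N)`. -/
noncomputable def lpPsi (φ : ℝ → ℝ) (N : ℝ) (lam : ℝ) : ℝ :=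
  φ (lam / N) - φ (2 * lam / N)

/-- The fattened cutoff `ψ̃_N = ψ_{N/2} + ψ_N + ψ_{2N}`. -/
noncomputable def lpPsiTilde (φ : ℝ → ℝ) (N : ℝ) (lam : ℝ) : ℝ :=
  lpPsi φ (N / 2) lam + lpPsi φ N lam + lpPsi φ (2 * N) lam

noncomputable def lpPsiD (φ : ℝ → ℝ) (M x : ℝ) : ℝ :=
  deriv φ (x / M) * (1 / M) - deriv φ (2 * x / M) * (2 / M)

noncomputable def lpPsiTildeD (φ : ℝ → ℝ) (N x : ℝ) : ℝ :=
  lpPsiD φ (N / 2) x + lpPsiD φ N x + lpPsiD φ (2 * N) x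

lemma hasDerivAt_lpPsi {φ : ℝ → ℝ} (hφd : Differentiable ℝ φ) (M x : ℝ) :
    HasDerivAt (lpPsi φ M) (lpPsiD φ M x) x := by
  have h1 : HasDerivAt (fun l : ℝ => φ (l / M)) (deriv φ (x / M) * (1 / M)) x := by
    have hi : HasDerivAt (fun l : ℝ => l / M) (1 / M) x := (hasDerivAt_id x).div_const M
    exact (hφd _).hasDerivAt.comp x hi
  have h2 : HasDerivAt (fun l : ℝ => φ (2 * l / M)) (deriv φ (2 * x / M) * (2 / M)) x := by
    have hi : HasDerivAt (fun l : ℝ => 2 * l / M) (2 / M) x := by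
      simpa using ((hasDerivAt_id x).const_mul 2).div_const M
    exact (hφd _).hasDerivAt.comp x hi
  exact h1.sub h2

lemma hasDerivAt_lpPsiTilde {φ : ℝ → ℝ} (hφd : Differentiable ℝ φ) (N x : ℝ) :
    HasDerivAt (lpPsiTilde φ N) (lpPsiTildeD φ N x) x := by
  exact
    ((hasDerivAt_lpPsi hφd (N / 2) x).add (hasDerivAt_lpPsi hφd N x)).add
      (hasDerivAt_lpPsi hφd (2 * N) x)

lemma abs_lpPsi_le {φ : ℝ → ℝ} (hφ_range : ∀ x : ℝ, φ x ∈ Icc (0 : ℝ) 1) (M l : ℝ) :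
    |lpPsi φ M l| ≤ 1 := by
  have h1 := hφ_range (l / M)
  have h2 := hφ_range (2 * l / M)
  simp only [mem_Icc] at h1 h2
  rw [lpPsi, abs_le]; constructor <;> linarith

lemma abs_lpPsiTilde_le {φ : ℝ → ℝ} (hφ_range : ∀ x : ℝ, φ x ∈ Icc (0 : ℝ) 1) (N l : ℝ) :
    |lpPsiTilde φ N l| ≤ 3 := by
  have h1 := abs_lpPsi_le hφ_range (N / 2) l
  have h2 := abs_lpPsi_le hφ_range N l
  have h3 := abs_lpPsi_le hφ_range (2 * N) l
  rw [abs_le] at h1 h2 h3 ⊢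
  rw [lpPsiTilde]
  constructor <;> linarith [h1.1, h1.2, h2.1, h2.2, h3.1, h3.2]

lemma lpPsiTilde_eq_zero {φ : ℝ → ℝ} (hφ_zero : ∀ x : ℝ, 2 ≤ x → φ x = 0)
    {N : ℝ} (hN : 0 < N) {l : ℝ} (hl : 4 * N ≤ l) : lpPsiTilde φ N l = 0 := by
  have key : ∀ M : ℝ, 0 < M → M ≤ 2 * N → lpPsi φ M l = 0 := by
    intro M hM hM2
    have h1 : (2 : ℝ) ≤ l / M := by
      rw [le_div_iff₀ hM]; nlinarith
    have h2 : (2 : ℝ) ≤ 2 * l / M := by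
      rw [le_div_iff₀ hM]; nlinarith
    rw [lpPsi, hφ_zero _ h1, hφ_zero _ h2, sub_zero]
  rw [lpPsiTilde, key (N / 2) (by linarith) (by linarith),
    key N hN (by linarith), key (2 * N) (by linarith) le_rfl]
  ring

lemma abs_lpPsiD_le {φ : ℝ → ℝ} {M0 : ℝ}
    (hder : ∀ y : ℝ, 0 ≤ y → |deriv φ y| ≤ M0)
    {M : ℝ} (hM : 0 < M) {x : ℝ} (hx : 0 ≤ x) :
    |lpPsiD φ M x| ≤ 3 * M0 / M := by
  have h1 : |deriv φ (x / M)| ≤ M0 := hder _ (by positivity)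
  have h2 : |deriv φ (2 * x / M)| ≤ M0 := hder _ (by positivity)
  calc |lpPsiD φ M x| ≤ |deriv φ (x / M) * (1 / M)| + |deriv φ (2 * x / M) * (2 / M)| :=
        abs_sub _ _
    _ ≤ M0 * (1 / M) + M0 * (2 / M) := by
        have e1 : |deriv φ (x / M) * (1 / M)| = |deriv φ (x / M)| * (1 / M) := by
          rw [abs_mul, abs_of_pos (show (0:ℝ) < 1 / M by positivity)]
        have e2 : |deriv φ (2 * x / M) * (2 / M)| = |deriv φ (2 * x / M)| * (2 / M) := by
          rw [abs_mul, abs_of_pos (show (0:ℝ) < 2 / M by positivity)]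
        rw [e1, e2]
        gcongr
    _ = 3 * M0 / M := by field_simp; ring

lemma abs_lpPsiTildeD_le {φ : ℝ → ℝ} {M0 : ℝ}
    (hder : ∀ y : ℝ, 0 ≤ y → |deriv φ y| ≤ M0)
    {N : ℝ} (hN : 0 < N) {x : ℝ} (hx : 0 ≤ x) :
    |lpPsiTildeD φ N x| ≤ 12 * M0 / N := by
  have hM0 : 0 ≤ M0 := le_trans (abs_nonneg _) (hder 0 le_rfl)
  have h1 := abs_lpPsiD_le hder (show (0:ℝ) < N / 2 by linarith) hx
  have h2 := abs_lpPsiD_le hder hN hx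
  have h3 := abs_lpPsiD_le hder (show (0:ℝ) < 2 * N by linarith) hx
  have tri : |lpPsiTildeD φ N x| ≤ 3 * M0 / (N / 2) + 3 * M0 / N + 3 * M0 / (2 * N) := by
    rw [lpPsiTildeD]
    calc |lpPsiD φ (N / 2) x + lpPsiD φ N x + lpPsiD φ (2 * N) x|
        ≤ |lpPsiD φ (N / 2) x + lpPsiD φ N x| + |lpPsiD φ (2 * N) x| := abs_add_le _ _
      _ ≤ (|lpPsiD φ (N / 2) x| + |lpPsiD φ N x|) + |lpPsiD φ (2 * N) x| := by
          gcongr; exact abs_add_le _ _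
      _ ≤ 3 * M0 / (N / 2) + 3 * M0 / N + 3 * M0 / (2 * N) := by gcongr
  refine tri.trans ?_
  have he : 3 * M0 / (N / 2) + 3 * M0 / N + 3 * M0 / (2 * N) = 21 * M0 / (2 * N) := by
    field_simp; ring
  rw [he, div_le_div_iff₀ (by linarith) hN]
  nlinarith

lemma continuous_lpPsiTilde {φ : ℝ → ℝ} (hc : Continuous φ) (N : ℝ) :
    Continuous (lpPsiTilde φ N) := by
  unfold lpPsiTilde lpPsi; fun_prop

lemma continuous_lpPsiTildeD {φ : ℝ → ℝ} (hc : Continuous (deriv φ)) (N : ℝ) :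
    Continuous (lpPsiTildeD φ N) := by
  unfold lpPsiTildeD lpPsiD; fun_prop

/-- The frequency-localized half-wave kernel
`K_N(t,r,s) = (2/π) ∫₀^∞ (sin(λ(r−1))/r) (sin(λ(s−1))/s) e^{iλt} ψ̃_N(λ) dλ`. -/
noncomputable def halfWaveKernel (φ : ℝ → ℝ) (N t r s : ℝ) : ℂ :=
  ((2 / Real.pi : ℝ) : ℂ) *
    ∫ lam in Ioi (0 : ℝ),
      ((Real.sin (lam * (r - 1)) / r : ℝ) : ℂ) *
        ((Real.sin (lam * (s - 1)) / s : ℝ) : ℂ) *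
        Complex.exp (Complex.I * (lam : ℂ) * (t : ℂ)) *
        ((lpPsiTilde φ N lam : ℝ) : ℂ)

/-- Dispersive kernel bound: there is `C = C(φ)` such that for all
`N > 0`, all `t ≠ 0` and all `r, s ≥ 1`, `|K_N(t,r,s)| ≤ C N² / |t|`. -/
theorem halfWaveKernel_dispersive_bound
    (φ : ℝ → ℝ) (hφ : ContDiff ℝ (⊤ : ℕ∞) φ)
    (hφ_range : ∀ x : ℝ, φ x ∈ Icc (0 : ℝ) 1)
    (hφ_one : ∀ x ∈ Icc (0 : ℝ) 1, φ x = 1)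
    (hφ_zero : ∀ x : ℝ, 2 ≤ x → φ x = 0) :
    ∃ C : ℝ, 0 < C ∧
      ∀ N : ℝ, 0 < N → ∀ t : ℝ, t ≠ 0 → ∀ r s : ℝ, 1 ≤ r → 1 ≤ s →
        ‖halfWaveKernel φ N t r s‖ ≤ C * N ^ 2 / |t| := by
  have hφd : Differentiable ℝ φ := hφ.differentiable (by simp)
  have hcont : Continuous (deriv φ) := hφ.continuous_deriv (by exact_mod_cast le_top)
  obtain ⟨M1, hM1⟩ := (isCompact_Icc (a := (0:ℝ)) (b := 3)).exists_bound_of_continuousOn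
    hcont.continuousOn
  set M0 : ℝ := max M1 0 with hM0def
  have hM0 : 0 ≤ M0 := le_max_right _ _
  have hder : ∀ x : ℝ, 0 ≤ x → |deriv φ x| ≤ M0 := by
    intro x hx
    rcases le_or_gt x 3 with h3 | h3
    · exact le_trans (hM1 x ⟨hx, h3⟩) (le_max_left _ _)
    · have hd : deriv φ x = 0 := by
        have hev : φ =ᶠ[nhds x] fun _ => 0 := by
          filter_upwards [Ioi_mem_nhds (show (2:ℝ) < x by linarith)] with y hy
          exact hφ_zero y (le_of_lt hy)
        rw [hev.deriv_eq]; simp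
      simp [hd, hM0]
  refine ⟨96 + 768 * M0, by linarith, ?_⟩
  intro N hN t ht r s hr hs
  have hr0 : (0:ℝ) < r := by linarith
  have hs0 : (0:ℝ) < s := by linarith
  set b : ℝ := 4 * N with hbdef
  have hb : 0 < b := by simp only [hbdef]; linarith
  -- the real amplitude and its derivative
  set G : ℝ → ℝ := fun l =>
    Real.sin (l * (r - 1)) / r * (Real.sin (l * (s - 1)) / s) * lpPsiTilde φ N l with hGdef
  set G' : ℝ → ℝ := fun l =>
    Real.cos (l * (r - 1)) * (r - 1) / r * (Real.sin (l * (s - 1)) / s) * lpPsiTilde φ N l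
      + Real.sin (l * (r - 1)) / r * (Real.cos (l * (s - 1)) * (s - 1) / s) * lpPsiTilde φ N l
      + Real.sin (l * (r - 1)) / r * (Real.sin (l * (s - 1)) / s) * lpPsiTildeD φ N l
    with hG'def
  have hGd : ∀ x : ℝ, HasDerivAt G (G' x) x := by
    intro x
    have hA : HasDerivAt (fun l : ℝ => Real.sin (l * (r - 1)) / r)
        (Real.cos (x * (r - 1)) * (r - 1) / r) x :=
      ((hasDerivAt_mul_const (r - 1)).sin).div_const r
    have hB : HasDerivAt (fun l : ℝ => Real.sin (l * (s - 1)) / s)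
        (Real.cos (x * (s - 1)) * (s - 1) / s) x :=
      ((hasDerivAt_mul_const (s - 1)).sin).div_const s
    have h := (hA.mul hB).mul (hasDerivAt_lpPsiTilde hφd N x)
    refine h.congr_deriv ?_
    simp only [hG'def, Pi.mul_apply]
    ring
  have hPsiC : Continuous (lpPsiTilde φ N) := continuous_lpPsiTilde hφ.continuous N
  have hGC : Continuous G := by
    apply Continuous.mul (Continuous.mul ?_ ?_) hPsiC <;> fun_prop
  have hG'C : Continuous G' := by
    have := continuous_lpPsiTildeD hcont N
    apply Continuous.add (Continuous.add ?_ ?_) ?_ <;>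
      [skip; skip; exact (Continuous.mul (by fun_prop) this)] <;> fun_prop
  -- pointwise bound for G'
  have hAbs : ∀ x : ℝ, 0 ≤ x → |Real.sin (x * (r - 1)) / r| ≤ x := by
    intro x hx
    rw [abs_div, abs_of_pos hr0, div_le_iff₀ hr0]
    calc |Real.sin (x * (r - 1))| ≤ |x * (r - 1)| := Real.abs_sin_le_abs
      _ = x * (r - 1) := abs_of_nonneg (by nlinarith)
      _ ≤ x * r := by nlinarith
  have hBbs : ∀ x : ℝ, 0 ≤ x → |Real.sin (x * (s - 1)) / s| ≤ x := by
    intro x hx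
    rw [abs_div, abs_of_pos hs0, div_le_iff₀ hs0]
    calc |Real.sin (x * (s - 1))| ≤ |x * (s - 1)| := Real.abs_sin_le_abs
      _ = x * (s - 1) := abs_of_nonneg (by nlinarith)
      _ ≤ x * s := by nlinarith
  have hA'bs : ∀ x : ℝ, |Real.cos (x * (r - 1)) * (r - 1) / r| ≤ 1 := by
    intro x
    rw [abs_div, abs_of_pos hr0, div_le_one hr0, abs_mul,
      abs_of_nonneg (show (0:ℝ) ≤ r - 1 by linarith)]
    nlinarith [Real.abs_cos_le_one (x * (r - 1)), abs_nonneg (Real.cos (x * (r-1)))]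
  have hB'bs : ∀ x : ℝ, |Real.cos (x * (s - 1)) * (s - 1) / s| ≤ 1 := by
    intro x
    rw [abs_div, abs_of_pos hs0, div_le_one hs0, abs_mul,
      abs_of_nonneg (show (0:ℝ) ≤ s - 1 by linarith)]
    nlinarith [Real.abs_cos_le_one (x * (s - 1)), abs_nonneg (Real.cos (x * (s-1)))]
  have hG'bound : ∀ x : ℝ, 0 ≤ x → x ≤ b → |G' x| ≤ 24 * N + 192 * M0 * N := by
    intro x hx hxb
    have hP := abs_lpPsiTilde_le hφ_range N x
    have hP' := abs_lpPsiTildeD_le hder hN hx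
    have hxb' : |Real.sin (x * (r - 1)) / r| ≤ b := (hAbs x hx).trans hxb
    have hxb'' : |Real.sin (x * (s - 1)) / s| ≤ b := (hBbs x hx).trans hxb
    have h1 : |Real.cos (x * (r - 1)) * (r - 1) / r * (Real.sin (x * (s - 1)) / s)
        * lpPsiTilde φ N x| ≤ 1 * b * 3 := by
      rw [abs_mul, abs_mul]
      have := mul_le_mul (hA'bs x) hxb'' (abs_nonneg _) zero_le_one
      exact mul_le_mul this hP (abs_nonneg _) (by positivity)
    have h2 : |Real.sin (x * (r - 1)) / r * (Real.cos (x * (s - 1)) * (s - 1) / s)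
        * lpPsiTilde φ N x| ≤ b * 1 * 3 := by
      rw [abs_mul, abs_mul]
      have := mul_le_mul hxb' (hB'bs x) (abs_nonneg _) hb.le
      exact mul_le_mul this hP (abs_nonneg _) (by positivity)
    have h3 : |Real.sin (x * (r - 1)) / r * (Real.sin (x * (s - 1)) / s)
        * lpPsiTildeD φ N x| ≤ b * b * (12 * M0 / N) := by
      rw [abs_mul, abs_mul]
      have := mul_le_mul hxb' hxb'' (abs_nonneg _) hb.le
      exact mul_le_mul this hP' (abs_nonneg _) (by positivity)
    have tri : |G' x| ≤ 1 * b * 3 + b * 1 * 3 + b * b * (12 * M0 / N) := by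
      simp only [hG'def]
      refine le_trans (abs_add_le _ _) (le_trans (add_le_add_left (abs_add_le _ _) _) ?_)
      linarith
    refine tri.trans ?_
    have he : b * b * (12 * M0 / N) = 192 * M0 * N := by
      simp only [hbdef]; field_simp; ring
    rw [he]
    simp only [hbdef]; linarith
  -- complex integrand
  set F : ℝ → ℂ := fun l => ((G l : ℝ) : ℂ) * Complex.exp (Complex.I * l * t) with hFdef
  have hFC : Continuous F := by
    exact (Complex.continuous_ofReal.comp hGC).mul (by fun_prop)
  have hGzero : ∀ l : ℝ, b ≤ l → G l = 0 := by
    intro l hl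
    have h4 : 4 * N ≤ l := by rw [← hbdef]; exact hl
    simp only [hGdef, lpPsiTilde_eq_zero hφ_zero hN h4, mul_zero]
  have hsplit : ∫ l in Ioi (0:ℝ), F l = ∫ l in Ioc 0 b, F l := by
    have hzero : EqOn F (fun _ => (0:ℂ)) (Ioi b) := by
      intro l hl
      simp [hFdef, hGzero l (le_of_lt hl)]
    have hI1 : IntegrableOn F (Ioc 0 b) := hFC.integrableOn_Ioc
    have hI2 : IntegrableOn F (Ioi b) :=
      (integrableOn_congr_fun hzero measurableSet_Ioi).mpr (integrableOn_zero)
    rw [← Ioc_union_Ioi_eq_Ioi hb.le,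
      setIntegral_union (Ioc_disjoint_Ioi le_rfl) measurableSet_Ioi hI1 hI2,
      setIntegral_congr_fun measurableSet_Ioi hzero]
    simp
  have hIoc : ∫ l in Ioc 0 b, F l = ∫ l in (0:ℝ)..b, F l :=
    (intervalIntegral.integral_of_le hb.le).symm
  -- integration by parts
  set v : ℝ → ℂ := fun x => (Complex.I * t)⁻¹ * Complex.exp (Complex.I * x * t) with hvdef
  have hI0 : (Complex.I * (t:ℂ)) ≠ 0 := by simp [Complex.ext_iff, ht]
  have hvd : ∀ x : ℝ, HasDerivAt v (Complex.exp (Complex.I * x * t)) x := by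
    intro x
    have h0 : HasDerivAt (fun y : ℝ => (y : ℂ)) 1 x := by
      simpa using (hasDerivAt_id x).ofReal_comp
    have h1 : HasDerivAt (fun y : ℝ => Complex.I * y * t) (Complex.I * t) x := by
      simpa [mul_comm, mul_assoc, mul_left_comm] using (h0.const_mul Complex.I).mul_const (t : ℂ)
    have h2 := (h1.cexp).const_mul (Complex.I * t)⁻¹
    refine h2.congr_deriv ?_
    rw [mul_comm (Complex.exp _), ← mul_assoc, inv_mul_cancel₀ hI0, one_mul]
  have hud : ∀ x : ℝ, HasDerivAt (fun y : ℝ => ((G y : ℝ) : ℂ)) ((G' x : ℝ) : ℂ) x :=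
    fun x => (hGd x).ofReal_comp
  have hu' : IntervalIntegrable (fun x : ℝ => ((G' x : ℝ) : ℂ)) volume 0 b :=
    (Complex.continuous_ofReal.comp hG'C).intervalIntegrable _ _
  have hv' : IntervalIntegrable (fun x : ℝ => Complex.exp (Complex.I * x * t)) volume 0 b := by
    apply Continuous.intervalIntegrable
    fun_prop
  have hibp := intervalIntegral.integral_mul_deriv_eq_deriv_mul
    (fun x _ => hud x) (fun x _ => hvd x) hu' hv'
  have hGb : G b = 0 := hGzero b le_rfl
  have hG0 : G 0 = 0 := by simp [hGdef]
  have hpull : ∫ x in (0:ℝ)..b, ((G' x : ℝ) : ℂ) * v x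
      = (Complex.I * t)⁻¹ *
        ∫ x in (0:ℝ)..b, ((G' x : ℝ) : ℂ) * Complex.exp (Complex.I * x * t) := by
    rw [← intervalIntegral.integral_const_mul]
    apply intervalIntegral.integral_congr
    intro x _
    simp only [hvdef]
    ring
  have hker : halfWaveKernel φ N t r s
      = ((2 / Real.pi : ℝ) : ℂ) * ∫ l in Ioi (0:ℝ), F l := by
    rw [halfWaveKernel]
    congr 1
    apply setIntegral_congr_fun measurableSet_Ioi
    intro l _
    simp only [hFdef, hGdef]
    push_cast
    ring
  have hkey : halfWaveKernel φ N t r s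
      = -(((2 / Real.pi : ℝ) : ℂ) * ((Complex.I * t)⁻¹ *
          ∫ x in (0:ℝ)..b, ((G' x : ℝ) : ℂ) * Complex.exp (Complex.I * x * t))) := by
    rw [hker, hsplit, hIoc, hibp, hGb, hG0, hpull]
    push_cast
    ring
  -- norm estimates
  set J : ℂ := ∫ x in (0:ℝ)..b, ((G' x : ℝ) : ℂ) * Complex.exp (Complex.I * x * t) with hJdef
  have hnorm1 : ‖J‖ ≤ (24 * N + 192 * M0 * N) * |b - 0| := by
    apply intervalIntegral.norm_integral_le_of_norm_le_const
    intro x hx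
    rw [uIoc_of_le hb.le] at hx
    have h1 : ‖Complex.exp (Complex.I * x * t)‖ = 1 := by
      rw [Complex.norm_exp]
      have hre : (Complex.I * x * t).re = 0 := by simp
      rw [hre, Real.exp_zero]
    rw [norm_mul, h1, mul_one, Complex.norm_real, Real.norm_eq_abs]
    exact hG'bound x hx.1.le hx.2
  have habs : |b - 0| = 4 * N := by rw [sub_zero, abs_of_pos hb]
  rw [habs] at hnorm1
  have ht0 : (0:ℝ) < |t| := abs_pos.mpr ht
  have hle : 2 / Real.pi ≤ 1 := by
    rw [div_le_one Real.pi_pos]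
    linarith [Real.pi_gt_three]
  rw [hkey, norm_neg, norm_mul, norm_mul]
  have hc1 : ‖((2 / Real.pi : ℝ) : ℂ)‖ = 2 / Real.pi := by
    rw [Complex.norm_real, Real.norm_eq_abs, abs_of_pos (by positivity)]
  have hc2 : ‖(Complex.I * (t:ℂ))⁻¹‖ = |t|⁻¹ := by
    rw [norm_inv, norm_mul, Complex.norm_I, one_mul, Complex.norm_real, Real.norm_eq_abs]
  rw [hc1, hc2]
  have e3 : (96 + 768 * M0) * N ^ 2 / |t| = |t|⁻¹ * ((24 * N + 192 * M0 * N) * (4 * N)) := by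
    field_simp
    ring
  rw [e3]
  have h5 : |t|⁻¹ * ‖J‖ ≤ |t|⁻¹ * ((24 * N + 192 * M0 * N) * (4 * N)) := by
    gcongr
  calc 2 / Real.pi * (|t|⁻¹ * ‖J‖)
      ≤ 1 * (|t|⁻¹ * ((24 * N + 192 * M0 * N) * (4 * N))) :=
        mul_le_mul hle h5 (by positivity) zero_le_one
    _ = |t|⁻¹ * ((24 * N + 192 * M0 * N) * (4 * N)) := one_mul _
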